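/- For every vertex v ∈ V, the random variable Q^v := lim_{m→∞} Σ_{w ∈ V, |w| < m} L^v_w·C(U^{vw}) exists almost surely, and the family (Q^v)_{v∈V} satisfies, almost surely for every v ∈ V, the pathwise recursive Quicksort fixed point equation Q^v = U^v·Q^{v1} + (1−U^v)·Q^{v2} + C(U^v). -/

import Mathlib

open MeasureTheory ProbabilityTheory Filter Finset

noncomputable section

/-- The Quicksort cost function `C(x) = 1 + 2x·ln x + 2(1-x)·ln(1-x)`
(with `Real.log 0 = 0`, encoding the convention `0·ln 0 = 0`). -/
def Cq (x : ℝ) : ℝ := 1 + 2 * x * Real.log x + 2 * (1 - x) * Real.log (1 - x)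

/-- Multiplicative path weights on the binary tree `V = {1,2}*` (words over `Bool`,
where `false` is the letter `1` and `true` is the letter `2`): `Lw U v w` is the
weight `L^v_w` of the path from `v` to `vw`, with `L^v_∅ = 1`,
`L^v_{w1} = L^v_w·U^{vw}` and `L^v_{w2} = L^v_w·(1 − U^{vw})`. -/
def Lw {Ω : Type*} (U : List Bool → Ω → ℝ) : List Bool → List Bool → Ω → ℝ
  | _, [], _ => 1
  | v, b :: w, ω => (if b then 1 - U v ω else U v ω) * Lw U (v ++ [b]) w ω

/-- The partial sums `R^v_m = Σ_{w ∈ V, |w| < m} L^v_w·C(U^{vw})` of the weighted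
branching process defining the Quicksort distribution. -/
def QSsum {Ω : Type*} (U : List Bool → Ω → ℝ) (v : List Bool) (m : ℕ) (ω : Ω) : ℝ :=
  ∑ k ∈ Finset.range m, ∑ w : Fin k → Bool,
    Lw U v (List.ofFn w) ω * Cq (U (v ++ List.ofFn w) ω)

namespace QT

open scoped ENNReal NNReal

/-! ### clamping -/

def clampI (x : ℝ) : ℝ := max 0 (min 1 x)

lemma clampI_mem (x : ℝ) : clampI x ∈ Set.Icc (0:ℝ) 1 :=
  ⟨le_max_left _ _, max_le (by norm_num) (min_le_left _ _)⟩

lemma clampI_of_mem {x : ℝ} (hx : x ∈ Set.Icc (0:ℝ) 1) : clampI x = x := by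
  unfold clampI
  rw [min_eq_right hx.2, max_eq_right hx.1]

lemma measurable_clampI : Measurable clampI :=
  (continuous_const.max (continuous_const.min continuous_id)).measurable

/-! ### basic facts about `Cq` -/

lemma continuous_Cq : Continuous Cq := by
  have h1 : Continuous fun x : ℝ => x * Real.log x := Real.continuous_mul_log
  have h2 : Continuous fun x : ℝ => (1 - x) * Real.log (1 - x) :=
    h1.comp (continuous_const.sub continuous_id)
  have h3 : Cq = fun x => 1 + 2 * (x * Real.log x) + 2 * ((1 - x) * Real.log (1 - x)) := by
    funext x; unfold Cq; ring
  rw [h3]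
  exact (continuous_const.add (continuous_const.mul h1)).add (continuous_const.mul h2)

lemma mul_log_ge {x : ℝ} (h0 : 0 ≤ x) : x - 1 ≤ x * Real.log x := by
  rcases eq_or_lt_of_le h0 with h | h
  · simp [← h]
  · have hlog : 1 - x⁻¹ ≤ Real.log x := by
      have h2 := Real.log_le_sub_one_of_pos (inv_pos.mpr h)
      rw [Real.log_inv] at h2; linarith
    have h3 : x * (1 - x⁻¹) ≤ x * Real.log x :=
      mul_le_mul_of_nonneg_left hlog h0
    have h4 : x * (1 - x⁻¹) = x - 1 := by field_simp
    linarith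

lemma abs_Cq_le {x : ℝ} (hx : x ∈ Set.Icc (0:ℝ) 1) : |Cq x| ≤ 1 := by
  obtain ⟨h0, h1⟩ := hx
  have ha : x * Real.log x ≤ 0 :=
    mul_nonpos_iff.2 (Or.inl ⟨h0, Real.log_nonpos h0 h1⟩)
  have hb : (1 - x) * Real.log (1 - x) ≤ 0 :=
    mul_nonpos_iff.2 (Or.inl ⟨by linarith, Real.log_nonpos (by linarith) (by linarith)⟩)
  have hc : x - 1 ≤ x * Real.log x := mul_log_ge h0
  have hd : (1 - x) - 1 ≤ (1 - x) * Real.log (1 - x) := mul_log_ge (by linarith)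
  rw [abs_le]
  unfold Cq
  constructor <;> nlinarith

/-! ### integrals of `Cq` -/

lemma integral_Cq_eq_zero : ∫ x in (0:ℝ)..1, Cq x = 0 := by
  set F : ℝ → ℝ := fun y =>
    y + (y ^ 2 * Real.log y - y ^ 2 / 2) + ((1 - y) ^ 2 / 2 - (1 - y) ^ 2 * Real.log (1 - y))
    with hFdef
  have hcont : ContinuousOn F (Set.Icc 0 1) := by
    have h1 : Continuous fun y : ℝ => y ^ 2 * Real.log y := by
      have : (fun y : ℝ => y ^ 2 * Real.log y) = fun y : ℝ => y * (y * Real.log y) := by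
        funext y; ring
      rw [this]; exact continuous_id.mul Real.continuous_mul_log
    have h2 : Continuous fun y : ℝ => (1 - y) ^ 2 * Real.log (1 - y) :=
      h1.comp (continuous_const.sub continuous_id)
    exact ((continuous_id.add (h1.sub ((continuous_id.pow 2).div_const 2))).add
      ((((continuous_const.sub continuous_id).pow 2).div_const 2).sub h2)).continuousOn
  have hderiv : ∀ x ∈ Set.Ioo (0:ℝ) 1, HasDerivAt F (Cq x) x := by
    intro x hx
    obtain ⟨hx0, hx1⟩ := hx
    have h1x : (0:ℝ) < 1 - x := by linarith
    have hid : HasDerivAt (fun y : ℝ => y) 1 x := hasDerivAt_id x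
    have hlog : HasDerivAt Real.log x⁻¹ x := Real.hasDerivAt_log hx0.ne'
    have hsq : HasDerivAt (fun y : ℝ => y ^ 2) (2 * x) x := by
      simpa using hasDerivAt_pow 2 x
    have h2 : HasDerivAt (fun y : ℝ => y ^ 2 * Real.log y)
        (2 * x * Real.log x + x ^ 2 * x⁻¹) x := hsq.mul hlog
    have hone : HasDerivAt (fun y : ℝ => 1 - y) (-1) x := by
      simpa using (hasDerivAt_id x).const_sub 1
    have hlog1 : HasDerivAt (fun y : ℝ => Real.log (1 - y)) ((1 - x)⁻¹ * -1) x :=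
      (Real.hasDerivAt_log h1x.ne').comp x hone
    have hsq1 : HasDerivAt (fun y : ℝ => (1 - y) ^ 2) (2 * (1 - x) * -1) x := by
      have := (hasDerivAt_pow 2 (1 - x)).comp x hone
      simpa [Function.comp_def] using this
    have h3 : HasDerivAt (fun y : ℝ => (1 - y) ^ 2 * Real.log (1 - y))
        (2 * (1 - x) * -1 * Real.log (1 - x) + (1 - x) ^ 2 * ((1 - x)⁻¹ * -1)) x :=
      hsq1.mul hlog1
    have h4 := (hid.add (h2.sub (hsq.div_const 2))).add ((hsq1.div_const 2).sub h3)
    refine h4.congr_deriv ?_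
    unfold Cq
    field_simp
    ring
  rw [intervalIntegral.integral_eq_sub_of_hasDerivAt_of_le zero_le_one hcont hderiv
    (continuous_Cq.intervalIntegrable 0 1)]
  simp [hFdef, Real.log_one, Real.log_zero]
  norm_num

lemma setIntegral_Cq : ∫ x in Set.Icc (0:ℝ) 1, Cq x = 0 := by
  rw [MeasureTheory.integral_Icc_eq_integral_Ioc,
    ← intervalIntegral.integral_of_le zero_le_one]
  exact integral_Cq_eq_zero

lemma setIntegral_gb (b : Bool) :
    ∫ x in Set.Icc (0:ℝ) 1, (if b then 1 - x else x) ^ 2 = 1/3 := by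
  rw [MeasureTheory.integral_Icc_eq_integral_Ioc,
    ← intervalIntegral.integral_of_le zero_le_one]
  cases b
  · norm_num [integral_pow]
  · have h := intervalIntegral.integral_comp_sub_left (a := (0:ℝ)) (b := 1) (fun y : ℝ => y ^ 2) 1
    norm_num at h ⊢
    exact h

def sigq : ℝ := ∫ x in Set.Icc (0:ℝ) 1, (Cq x) ^ 2

lemma sigq_nonneg : 0 ≤ sigq :=
  MeasureTheory.setIntegral_nonneg measurableSet_Icc fun x _ => sq_nonneg _

/-! ### basic facts about `Lw` -/

lemma Lw_congr {Ωa Ωb : Type*} {U : List Bool → Ωa → ℝ} {U' : List Bool → Ωb → ℝ}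
    {ω : Ωa} {ω' : Ωb} (w : List Bool) : ∀ v : List Bool,
    (∀ p : List Bool, p <+: w → p ≠ w → U (v ++ p) ω = U' (v ++ p) ω') →
    Lw U v w ω = Lw U' v w ω' := by
  induction w with
  | nil => intro v _; rfl
  | cons b u ih =>
    intro v h
    have h0 : U v ω = U' v ω' := by
      have := h [] ⟨b :: u, rfl⟩ (by simp)
      simpa using this
    have hrec : Lw U (v ++ [b]) u ω = Lw U' (v ++ [b]) u ω' := by
      apply ih
      intro p hp hne
      have := h (b :: p) (List.cons_prefix_cons.2 ⟨rfl, hp⟩) (by simpa using hne)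
      rw [List.append_assoc]
      simpa using this
    simp only [Lw, h0, hrec]

lemma Lw_measurable {Ωa : Type*} [MeasurableSpace Ωa] {U : List Bool → Ωa → ℝ}
    (hU : ∀ p, Measurable (U p)) (w : List Bool) : ∀ v, Measurable (Lw U v w) := by
  induction w with
  | nil => intro v; exact measurable_const
  | cons b u ih =>
    intro v
    show Measurable fun ω => (if b then 1 - U v ω else U v ω) * Lw U (v ++ [b]) u ω
    cases b
    · exact (hU v).mul (ih (v ++ [false]))
    · exact ((measurable_const.sub (hU v)).mul (ih (v ++ [true])))

lemma Lw_mem {Ωa : Type*} {U : List Bool → Ωa → ℝ}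
    (hU : ∀ p ω, U p ω ∈ Set.Icc (0:ℝ) 1) (w : List Bool) :
    ∀ (v : List Bool) (ω : Ωa), Lw U v w ω ∈ Set.Icc (0:ℝ) 1 := by
  induction w with
  | nil => intro v ω; exact ⟨zero_le_one, le_refl 1⟩
  | cons b u ih =>
    intro v ω
    obtain ⟨h0, h1⟩ := hU v ω
    obtain ⟨h0', h1'⟩ := ih (v ++ [b]) ω
    show (if b then 1 - U v ω else U v ω) * Lw U (v ++ [b]) u ω ∈ Set.Icc (0:ℝ) 1
    have ha : (if b then 1 - U v ω else U v ω) ∈ Set.Icc (0:ℝ) 1 := by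
      cases b <;> simp <;> constructor <;> linarith
    exact ⟨mul_nonneg ha.1 h0', mul_le_one₀ ha.2 h0' h1'⟩

lemma QSsum_congr {Ωa Ωb : Type*} {U : List Bool → Ωa → ℝ} {U' : List Bool → Ωb → ℝ}
    {ω : Ωa} {ω' : Ωb} (h : ∀ p, U p ω = U' p ω') (v : List Bool) (m : ℕ) :
    QSsum U v m ω = QSsum U' v m ω' := by
  unfold QSsum
  refine Finset.sum_congr rfl fun k _ => Finset.sum_congr rfl fun w _ => ?_
  rw [Lw_congr _ _ (fun p _ _ => h _), h _]

/-! ### the recursion for partial sums -/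

lemma ofFn_cons {k : ℕ} (b : Bool) (u : Fin k → Bool) :
    List.ofFn (Fin.cons b u) = b :: List.ofFn u := by
  rw [List.ofFn_succ]
  simp

lemma QSsum_succ {Ωa : Type*} (U : List Bool → Ωa → ℝ) (v : List Bool) (m : ℕ) (ω : Ωa) :
    QSsum U v (m + 1) ω = Cq (U v ω) + U v ω * QSsum U (v ++ [false]) m ω
      + (1 - U v ω) * QSsum U (v ++ [true]) m ω := by
  unfold QSsum
  rw [Finset.sum_range_succ']
  have h0 : (∑ w : Fin 0 → Bool, Lw U v (List.ofFn w) ω * Cq (U (v ++ List.ofFn w) ω))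
      = Cq (U v ω) := by
    simp [Lw]
  have hsucc : ∀ k : ℕ,
      (∑ w : Fin (k+1) → Bool, Lw U v (List.ofFn w) ω * Cq (U (v ++ List.ofFn w) ω))
      = U v ω * (∑ w : Fin k → Bool,
          Lw U (v ++ [false]) (List.ofFn w) ω * Cq (U ((v ++ [false]) ++ List.ofFn w) ω))
        + (1 - U v ω) * (∑ w : Fin k → Bool,
          Lw U (v ++ [true]) (List.ofFn w) ω * Cq (U ((v ++ [true]) ++ List.ofFn w) ω)) := by
    intro k
    have e1 : (∑ w : Fin (k+1) → Bool, Lw U v (List.ofFn w) ω * Cq (U (v ++ List.ofFn w) ω))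
        = ∑ bw : Bool × (Fin k → Bool),
            Lw U v (List.ofFn (Fin.cons bw.1 bw.2)) ω
              * Cq (U (v ++ List.ofFn (Fin.cons bw.1 bw.2)) ω) := by
      apply Fintype.sum_equiv (Fin.consEquiv fun _ : Fin (k+1) => Bool).symm
      intro w
      simp only [Fin.consEquiv, Equiv.coe_fn_symm_mk]
      rw [Fin.cons_self_tail]
    rw [e1, Fintype.sum_prod_type, Fintype.sum_bool]
    have e2 : ∀ (b : Bool) (u : Fin k → Bool),
        Lw U v (List.ofFn (Fin.cons b u)) ω * Cq (U (v ++ List.ofFn (Fin.cons b u)) ω)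
        = (if b then 1 - U v ω else U v ω) *
            (Lw U (v ++ [b]) (List.ofFn u) ω * Cq (U ((v ++ [b]) ++ List.ofFn u) ω)) := by
      intro b u
      rw [ofFn_cons]
      show (if b then 1 - U v ω else U v ω) * Lw U (v ++ [b]) (List.ofFn u) ω
          * Cq (U (v ++ (b :: List.ofFn u)) ω) = _
      rw [List.append_cons v b (List.ofFn u)]
      ring
    simp only [e2]
    rw [← Finset.mul_sum, ← Finset.mul_sum]
    norm_num
    ring
  simp only [hsucc, h0]
  rw [Finset.sum_add_distrib, ← Finset.mul_sum, ← Finset.mul_sum]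
  ring

/-! ### separation via independence -/

def coordFn (S : Finset (List Bool)) : List Bool → (S → ℝ) → ℝ :=
  fun p u => if h : p ∈ S then u ⟨p, h⟩ else 0

lemma coordFn_measurable (S : Finset (List Bool)) (p : List Bool) :
    Measurable (coordFn S p) := by
  unfold coordFn
  split_ifs with h
  · exact measurable_pi_apply _
  · exact measurable_const

lemma coordFn_eq {S : Finset (List Bool)} {p : List Bool} (h : p ∈ S) {Ωa : Type*}
    (X : List Bool → Ωa → ℝ) (ω : Ωa) :
    X p ω = coordFn S p (fun i : S => X i ω) := by
  unfold coordFn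
  rw [dif_pos h]

lemma integrable_of_bound {Ωa : Type*} [MeasurableSpace Ωa] (P : Measure Ωa)
    [IsProbabilityMeasure P] {f : Ωa → ℝ} (hm : Measurable f) (C : ℝ)
    (h : ∀ ω, |f ω| ≤ C) : Integrable f P := by
  refine (integrable_const C).mono' hm.aestronglyMeasurable ?_
  exact Filter.Eventually.of_forall fun ω => by rw [Real.norm_eq_abs]; exact h ω

lemma sep_integral {Ωa : Type*} [MeasurableSpace Ωa] {P : Measure Ωa} [IsProbabilityMeasure P]
    {X : List Bool → Ωa → ℝ} (hXm : ∀ v, Measurable (X v))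
    (hXi : iIndepFun X P)
    (S : Finset (List Bool)) (x : List Bool) (hx : x ∉ S)
    (F : Ωa → ℝ) (φ : (S → ℝ) → ℝ) (hφ : Measurable φ)
    (hF : ∀ ω, F ω = φ (fun i : S => X i ω))
    (CF : ℝ) (hFb : ∀ ω, |F ω| ≤ CF)
    (ψ : ℝ → ℝ) (hψ : Measurable ψ)
    (Cψ : ℝ) (hψb : ∀ ω, |ψ (X x ω)| ≤ Cψ) :
    ∫ ω, F ω * ψ (X x ω) ∂P = (∫ ω, F ω ∂P) * ∫ ω, ψ (X x ω) ∂P := by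
  have hFmeas : Measurable F := by
    have : F = fun ω => φ (fun i : S => X i ω) := funext hF
    rw [this]
    exact hφ.comp (measurable_pi_lambda _ fun i => hXm i)
  have hGmeas : Measurable fun ω => ψ (X x ω) := hψ.comp (hXm x)
  have hind : IndepFun F (fun ω => ψ (X x ω)) P := by
    have h0 := hXi.indepFun_finset S {x} (Finset.disjoint_singleton_right.mpr hx) hXm
    have h1 := h0.comp (φ := φ)
      (ψ := fun u : ({x} : Finset (List Bool)) → ℝ => ψ (u ⟨x, Finset.mem_singleton_self x⟩))
      hφ (hψ.comp (measurable_pi_apply _))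
    have e1 : (φ ∘ fun a (i : S) => X i a) = F := (funext hF).symm
    have e2 : ((fun u : ({x} : Finset (List Bool)) → ℝ =>
        ψ (u ⟨x, Finset.mem_singleton_self x⟩)) ∘ fun a (i : ({x} : Finset (List Bool))) => X i a)
        = fun ω => ψ (X x ω) := rfl
    rwa [e1, e2] at h1
  exact hind.integral_mul_eq_mul_integral hFmeas.aestronglyMeasurable hGmeas.aestronglyMeasurable

/-! ### moment computations -/

section core

variable {Ωa : Type*} [MeasurableSpace Ωa] {P : Measure Ωa} [IsProbabilityMeasure P]
  {X : List Bool → Ωa → ℝ}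

lemma gb_measurable (b : Bool) : Measurable fun y : ℝ => (if b then 1 - y else y) ^ 2 := by
  cases b
  · simpa using (measurable_id.pow_const 2)
  · simpa using ((measurable_const.sub measurable_id).pow_const 2)

lemma integral_Lw_sq (hXm : ∀ v, Measurable (X v))
    (hXi : iIndepFun X P)
    (hXb : ∀ v ω, X v ω ∈ Set.Icc (0:ℝ) 1)
    (hXu : ∀ (x : List Bool) (ψ : ℝ → ℝ), Measurable ψ →
      ∫ ω, ψ (X x ω) ∂P = ∫ y in Set.Icc (0:ℝ) 1, ψ y)
    (w : List Bool) : ∀ v, ∫ ω, (Lw X v w ω) ^ 2 ∂P = (1/3 : ℝ) ^ w.length := by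
  induction w with
  | nil =>
    intro v
    have h : (fun ω => (Lw X v List.nil ω) ^ 2) = fun _ => (1:ℝ) := by
      funext ω; simp [Lw]
    rw [h]
    simp
  | cons b u ih =>
    intro v
    set S : Finset (List Bool) := (u.inits.map (fun q => (v ++ [b]) ++ q)).toFinset with hSdef
    have hvS : v ∉ S := by
      intro hv
      rw [hSdef, List.mem_toFinset, List.mem_map] at hv
      obtain ⟨p, _, he⟩ := hv
      apply_fun List.length at he
      simp at he
    have key := sep_integral hXm hXi S v hvS
      (fun ω => (Lw X (v ++ [b]) u ω) ^ 2)
      (fun uu => (Lw (coordFn S) (v ++ [b]) u uu) ^ 2)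
      ((Lw_measurable (coordFn_measurable S) u (v ++ [b])).pow_const 2)
      (fun ω => by
        show (Lw X (v ++ [b]) u ω) ^ 2 = (Lw (coordFn S) (v ++ [b]) u (fun i : S => X i ω)) ^ 2
        congr 1
        apply Lw_congr
        intro p hp _
        apply coordFn_eq
        rw [hSdef, List.mem_toFinset, List.mem_map]
        exact ⟨p, (List.mem_inits p u).2 hp, rfl⟩)
      1 (fun ω => by
        obtain ⟨ha, hb2⟩ := Lw_mem hXb u (v ++ [b]) ω
        rw [abs_of_nonneg (pow_nonneg ha 2)]
        exact pow_le_one₀ ha hb2)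
      (fun y => (if b then 1 - y else y) ^ 2) (gb_measurable b)
      1 (fun ω => by
        obtain ⟨ha, hb2⟩ := hXb v ω
        have hmem : (if b then 1 - X v ω else X v ω) ∈ Set.Icc (0:ℝ) 1 := by
          cases b <;> simp <;> constructor <;> linarith
        show |(if b then 1 - X v ω else X v ω) ^ 2| ≤ 1
        rw [abs_of_nonneg (pow_nonneg hmem.1 2)]
        exact pow_le_one₀ hmem.1 hmem.2)
    have lhs_eq : ∫ ω, (Lw X v (b :: u) ω) ^ 2 ∂P
        = ∫ ω, (Lw X (v ++ [b]) u ω) ^ 2 * (if b then 1 - X v ω else X v ω) ^ 2 ∂P := by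
      congr 1
      funext ω
      show ((if b then 1 - X v ω else X v ω) * Lw X (v ++ [b]) u ω) ^ 2 = _
      ring
    rw [lhs_eq, key, ih (v ++ [b]), hXu v (fun y => (if b then 1 - y else y) ^ 2)
      (gb_measurable b), setIntegral_gb b, List.length_cons, pow_succ]

lemma integral_term_sq (hXm : ∀ v, Measurable (X v))
    (hXi : iIndepFun X P)
    (hXb : ∀ v ω, X v ω ∈ Set.Icc (0:ℝ) 1)
    (hXu : ∀ (x : List Bool) (ψ : ℝ → ℝ), Measurable ψ →
      ∫ ω, ψ (X x ω) ∂P = ∫ y in Set.Icc (0:ℝ) 1, ψ y)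
    (v w : List Bool) :
    ∫ ω, (Lw X v w ω * Cq (X (v ++ w) ω)) ^ 2 ∂P = (1/3 : ℝ) ^ w.length * sigq := by
  set S : Finset (List Bool) := ((w.inits.map (fun q => v ++ q)).toFinset).erase (v ++ w)
    with hSdef
  have hxS : v ++ w ∉ S := Finset.notMem_erase _ _
  have key := sep_integral hXm hXi S (v ++ w) hxS
    (fun ω => (Lw X v w ω) ^ 2)
    (fun uu => (Lw (coordFn S) v w uu) ^ 2)
    ((Lw_measurable (coordFn_measurable S) w v).pow_const 2)
    (fun ω => by
      show (Lw X v w ω) ^ 2 = (Lw (coordFn S) v w (fun i : S => X i ω)) ^ 2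
      congr 1
      apply Lw_congr
      intro p hp hne
      apply coordFn_eq
      rw [hSdef]
      refine Finset.mem_erase.2 ⟨?_, ?_⟩
      · intro he; exact hne (List.append_cancel_left he)
      · rw [List.mem_toFinset, List.mem_map]
        exact ⟨p, (List.mem_inits p w).2 hp, rfl⟩)
    1 (fun ω => by
      obtain ⟨ha, hb2⟩ := Lw_mem hXb w v ω
      rw [abs_of_nonneg (pow_nonneg ha 2)]
      exact pow_le_one₀ ha hb2)
    (fun y => (Cq y) ^ 2) (continuous_Cq.measurable.pow_const 2)
    1 (fun ω => by
      show |Cq (X (v ++ w) ω) ^ 2| ≤ 1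
      rw [abs_of_nonneg (sq_nonneg _), ← sq_abs]
      have h := abs_Cq_le (hXb (v ++ w) ω)
      nlinarith [abs_nonneg (Cq (X (v ++ w) ω))])
  have lhs_eq : ∫ ω, (Lw X v w ω * Cq (X (v ++ w) ω)) ^ 2 ∂P
      = ∫ ω, (Lw X v w ω) ^ 2 * Cq (X (v ++ w) ω) ^ 2 ∂P := by
    congr 1; funext ω; ring
  rw [lhs_eq]
  rw [show ∫ ω, (Lw X v w ω) ^ 2 * Cq (X (v ++ w) ω) ^ 2 ∂P
      = (∫ ω, (Lw X v w ω) ^ 2 ∂P) * ∫ ω, Cq (X (v ++ w) ω) ^ 2 ∂P from key]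
  rw [integral_Lw_sq hXm hXi hXb hXu w v]
  rw [show ∫ ω, Cq (X (v ++ w) ω) ^ 2 ∂P = sigq from by
    rw [hXu (v ++ w) (fun y => (Cq y) ^ 2) (continuous_Cq.measurable.pow_const 2)]; rfl]

lemma integral_term_mul_ne (hXm : ∀ v, Measurable (X v))
    (hXi : iIndepFun X P)
    (hXb : ∀ v ω, X v ω ∈ Set.Icc (0:ℝ) 1)
    (hXu : ∀ (x : List Bool) (ψ : ℝ → ℝ), Measurable ψ →
      ∫ ω, ψ (X x ω) ∂P = ∫ y in Set.Icc (0:ℝ) 1, ψ y)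
    (v w w' : List Bool) (hk : w.length = w'.length) (hne : w ≠ w') :
    ∫ ω, (Lw X v w ω * Cq (X (v ++ w) ω)) * (Lw X v w' ω * Cq (X (v ++ w') ω)) ∂P = 0 := by
  set S : Finset (List Bool) :=
    (((w.inits ++ w'.inits).map (fun q => v ++ q)).toFinset).erase (v ++ w) with hSdef
  have hxS : v ++ w ∉ S := Finset.notMem_erase _ _
  have hmem : ∀ p : List Bool, (p <+: w ∧ p ≠ w) ∨ (p <+: w') → v ++ p ∈ S := by
    intro p hp
    rw [hSdef]
    refine Finset.mem_erase.2 ⟨?_, ?_⟩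
    · intro he
      have hpw : p = w := List.append_cancel_left he
      rcases hp with ⟨_, hne'⟩ | hp'
      · exact hne' hpw
      · subst hpw
        exact hne (hp'.eq_of_length hk)
    · rw [List.mem_toFinset, List.mem_map]
      rcases hp with ⟨hp', _⟩ | hp'
      · exact ⟨p, by rw [List.mem_append]; exact Or.inl ((List.mem_inits p w).2 hp'), rfl⟩
      · exact ⟨p, by rw [List.mem_append]; exact Or.inr ((List.mem_inits p w').2 hp'), rfl⟩
  have key := sep_integral hXm hXi S (v ++ w) hxS
    (fun ω => Lw X v w ω * (Lw X v w' ω * Cq (X (v ++ w') ω)))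
    (fun uu => Lw (coordFn S) v w uu * (Lw (coordFn S) v w' uu * Cq (coordFn S (v ++ w') uu)))
    ((Lw_measurable (coordFn_measurable S) w v).mul
      ((Lw_measurable (coordFn_measurable S) w' v).mul
        (continuous_Cq.measurable.comp (coordFn_measurable S (v ++ w')))))
    (fun ω => by
      have e1 : Lw X v w ω = Lw (coordFn S) v w (fun i : S => X i ω) :=
        Lw_congr _ _ fun p hp hne' => coordFn_eq (hmem p (Or.inl ⟨hp, hne'⟩)) X ω
      have e2 : Lw X v w' ω = Lw (coordFn S) v w' (fun i : S => X i ω) :=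
        Lw_congr _ _ fun p hp _ => coordFn_eq (hmem p (Or.inr hp)) X ω
      have e3 : X (v ++ w') ω = coordFn S (v ++ w') (fun i : S => X i ω) :=
        coordFn_eq (hmem w' (Or.inr (List.prefix_refl w'))) X ω
      show Lw X v w ω * (Lw X v w' ω * Cq (X (v ++ w') ω))
          = Lw (coordFn S) v w (fun i : S => X i ω)
            * (Lw (coordFn S) v w' (fun i : S => X i ω)
              * Cq (coordFn S (v ++ w') (fun i : S => X i ω)))
      rw [← e1, ← e2, ← e3])
    1 (fun ω => by
      have h1 := Lw_mem hXb w v ω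
      have h2 := Lw_mem hXb w' v ω
      have h3 := abs_Cq_le (hXb (v ++ w') ω)
      show |Lw X v w ω * (Lw X v w' ω * Cq (X (v ++ w') ω))| ≤ 1
      rw [abs_mul, abs_mul]
      have e1 : |Lw X v w ω| ≤ 1 := by rw [abs_of_nonneg h1.1]; exact h1.2
      have e2 : |Lw X v w' ω| ≤ 1 := by rw [abs_of_nonneg h2.1]; exact h2.2
      exact mul_le_one₀ e1 (mul_nonneg (abs_nonneg _) (abs_nonneg _))
        (mul_le_one₀ e2 (abs_nonneg _) h3))
    Cq continuous_Cq.measurable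
    1 (fun ω => abs_Cq_le (hXb (v ++ w) ω))
  have lhs_eq : ∫ ω, (Lw X v w ω * Cq (X (v ++ w) ω)) * (Lw X v w' ω * Cq (X (v ++ w') ω)) ∂P
      = ∫ ω, (Lw X v w ω * (Lw X v w' ω * Cq (X (v ++ w') ω))) * Cq (X (v ++ w) ω) ∂P := by
    congr 1; funext ω; ring
  rw [lhs_eq]
  rw [show ∫ ω, (Lw X v w ω * (Lw X v w' ω * Cq (X (v ++ w') ω))) * Cq (X (v ++ w) ω) ∂P
      = (∫ ω, Lw X v w ω * (Lw X v w' ω * Cq (X (v ++ w') ω)) ∂P)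
        * ∫ ω, Cq (X (v ++ w) ω) ∂P from key]
  rw [show ∫ ω, Cq (X (v ++ w) ω) ∂P = 0 from by
    rw [hXu (v ++ w) Cq continuous_Cq.measurable]; exact setIntegral_Cq]
  rw [mul_zero]

def Dk {Ωa : Type*} (X : List Bool → Ωa → ℝ) (v : List Bool) (k : ℕ) (ω : Ωa) : ℝ :=
  ∑ w : Fin k → Bool, Lw X v (List.ofFn w) ω * Cq (X (v ++ List.ofFn w) ω)

lemma Dk_measurable (hXm : ∀ v, Measurable (X v)) (v : List Bool) (k : ℕ) :
    Measurable (Dk X v k) := by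
  show Measurable fun ω => ∑ w : Fin k → Bool, Lw X v (List.ofFn w) ω * Cq (X (v ++ List.ofFn w) ω)
  exact Finset.measurable_sum _ fun w _ =>
    (Lw_measurable hXm _ v).mul (continuous_Cq.measurable.comp (hXm _))

lemma term_abs_le (hXb : ∀ v ω, X v ω ∈ Set.Icc (0:ℝ) 1) (v u : List Bool) (ω : Ωa) :
    |Lw X v u ω * Cq (X (v ++ u) ω)| ≤ 1 := by
  rw [abs_mul]
  have h1 := Lw_mem hXb u v ω
  exact mul_le_one₀ (by rw [abs_of_nonneg h1.1]; exact h1.2) (abs_nonneg _)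
    (abs_Cq_le (hXb _ ω))

lemma Dk_abs_le (hXb : ∀ v ω, X v ω ∈ Set.Icc (0:ℝ) 1) (v : List Bool) (k : ℕ) (ω : Ωa) :
    |Dk X v k ω| ≤ 2 ^ k := by
  unfold Dk
  calc |∑ w : Fin k → Bool, Lw X v (List.ofFn w) ω * Cq (X (v ++ List.ofFn w) ω)|
      ≤ ∑ w : Fin k → Bool, |Lw X v (List.ofFn w) ω * Cq (X (v ++ List.ofFn w) ω)| :=
        Finset.abs_sum_le_sum_abs _ _
    _ ≤ ∑ _w : Fin k → Bool, (1:ℝ) := Finset.sum_le_sum fun w _ => term_abs_le hXb v _ ω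
    _ = 2 ^ k := by simp [Finset.card_univ]

lemma integral_Dk_sq (hXm : ∀ v, Measurable (X v))
    (hXi : iIndepFun X P)
    (hXb : ∀ v ω, X v ω ∈ Set.Icc (0:ℝ) 1)
    (hXu : ∀ (x : List Bool) (ψ : ℝ → ℝ), Measurable ψ →
      ∫ ω, ψ (X x ω) ∂P = ∫ y in Set.Icc (0:ℝ) 1, ψ y)
    (v : List Bool) (k : ℕ) :
    ∫ ω, (Dk X v k ω) ^ 2 ∂P = (2/3 : ℝ) ^ k * sigq := by
  set T : (Fin k → Bool) → Ωa → ℝ :=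
    fun w ω => Lw X v (List.ofFn w) ω * Cq (X (v ++ List.ofFn w) ω) with hT
  have hTm : ∀ w, Measurable (T w) := fun w =>
    (Lw_measurable hXm _ v).mul (continuous_Cq.measurable.comp (hXm _))
  have hTb : ∀ w ω, |T w ω| ≤ 1 := fun w ω => term_abs_le hXb v _ ω
  have hTTint : ∀ w w' : Fin k → Bool, Integrable (fun ω => T w ω * T w' ω) P := by
    intro w w'
    refine integrable_of_bound P ((hTm w).mul (hTm w')) 1 fun ω => ?_
    rw [abs_mul]
    exact mul_le_one₀ (hTb w ω) (abs_nonneg _) (hTb w' ω)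
  have e0 : ∀ ω, (Dk X v k ω) ^ 2 = ∑ w : Fin k → Bool, ∑ w' : Fin k → Bool, T w ω * T w' ω := by
    intro ω
    rw [sq]
    exact Finset.sum_mul_sum _ _ _ _
  have e1 : ∫ ω, (Dk X v k ω) ^ 2 ∂P
      = ∑ w : Fin k → Bool, ∑ w' : Fin k → Bool, ∫ ω, T w ω * T w' ω ∂P := by
    rw [MeasureTheory.integral_congr_ae (Filter.Eventually.of_forall e0)]
    rw [MeasureTheory.integral_finset_sum _ fun w _ =>
      MeasureTheory.integrable_finset_sum _ fun w' _ => hTTint w w']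
    exact Finset.sum_congr rfl fun w _ =>
      MeasureTheory.integral_finset_sum _ fun w' _ => hTTint w w'
  have hval : ∀ w w' : Fin k → Bool,
      (∫ ω, T w ω * T w' ω ∂P) = if w = w' then (1/3:ℝ) ^ k * sigq else 0 := by
    intro w w'
    by_cases h : w = w'
    · subst h
      rw [if_pos rfl]
      have h2 := integral_term_sq hXm hXi hXb hXu v (List.ofFn w)
      rw [List.length_ofFn] at h2
      rw [← h2]
      congr 1
      funext ω
      rw [sq]
    · rw [if_neg h]
      exact integral_term_mul_ne hXm hXi hXb hXu v _ _ (by simp)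
        fun he => h (List.ofFn_injective he)
  rw [e1]
  have e2 : ∀ w : Fin k → Bool,
      (∑ w' : Fin k → Bool, ∫ ω, T w ω * T w' ω ∂P) = (1/3:ℝ) ^ k * sigq := by
    intro w
    rw [Finset.sum_congr rfl fun w' _ => hval w w']
    rw [Finset.sum_ite_eq]
    simp
  rw [Finset.sum_congr rfl fun w _ => e2 w, Finset.sum_const, Finset.card_univ]
  have hcard : Fintype.card (Fin k → Bool) = 2 ^ k := by simp
  rw [hcard]
  rw [nsmul_eq_mul]
  push_cast
  rw [← mul_assoc, ← mul_pow]
  norm_num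

lemma integral_Dk_abs_le (hXm : ∀ v, Measurable (X v))
    (hXi : iIndepFun X P)
    (hXb : ∀ v ω, X v ω ∈ Set.Icc (0:ℝ) 1)
    (hXu : ∀ (x : List Bool) (ψ : ℝ → ℝ), Measurable ψ →
      ∫ ω, ψ (X x ω) ∂P = ∫ y in Set.Icc (0:ℝ) 1, ψ y)
    (v : List Bool) (k : ℕ) :
    ∫ ω, |Dk X v k ω| ∂P ≤ (1 + sigq)/2 * (Real.sqrt (2/3)) ^ k := by
  set ε : ℝ := (Real.sqrt (2/3)) ^ k with hε
  have hεpos : 0 < ε := pow_pos (Real.sqrt_pos.2 (by norm_num)) k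
  have hε2 : ε ^ 2 = (2/3 : ℝ) ^ k := by
    rw [hε, ← pow_mul, mul_comm, pow_mul, Real.sq_sqrt (by norm_num : (0:ℝ) ≤ 2/3)]
  have hDm := Dk_measurable hXm v k
  have hDint : Integrable (fun ω => |Dk X v k ω|) P :=
    integrable_of_bound P hDm.abs (2 ^ k) fun ω => by
      rw [abs_abs]; exact Dk_abs_le hXb v k ω
  have hD2int : Integrable (fun ω => (Dk X v k ω) ^ 2) P := by
    refine integrable_of_bound P (hDm.pow_const 2) ((2 ^ k) ^ 2) fun ω => ?_
    rw [abs_of_nonneg (sq_nonneg _), ← sq_abs]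
    have h := Dk_abs_le hXb v k ω
    nlinarith [abs_nonneg (Dk X v k ω)]
  have hpt : ∀ ω, |Dk X v k ω| ≤ (ε + (Dk X v k ω) ^ 2 / ε) / 2 := by
    intro ω
    have hkey : ε ^ 2 + (Dk X v k ω) ^ 2 - 2 * ε * |Dk X v k ω| ≥ 0 := by
      nlinarith [sq_nonneg (|Dk X v k ω| - ε), sq_abs (Dk X v k ω)]
    have hq : ε + (Dk X v k ω) ^ 2 / ε - |Dk X v k ω| * 2
        = (ε ^ 2 + (Dk X v k ω) ^ 2 - 2 * ε * |Dk X v k ω|) / ε := by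
      field_simp
    have h3 : 0 ≤ ε + (Dk X v k ω) ^ 2 / ε - |Dk X v k ω| * 2 := by
      rw [hq]
      exact div_nonneg hkey hεpos.le
    linarith
  have hsum_int : Integrable (fun ω => (ε + (Dk X v k ω) ^ 2 / ε) / 2) P := by
    have h := ((integrable_const ε).add (hD2int.div_const ε)).div_const 2
    simpa [Pi.add_apply] using h
  have hint := MeasureTheory.integral_mono hDint hsum_int hpt
  have hrhs : ∫ ω, (ε + (Dk X v k ω) ^ 2 / ε) / 2 ∂P
      = (ε + ((2/3:ℝ) ^ k * sigq) / ε) / 2 := by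
    rw [MeasureTheory.integral_div, MeasureTheory.integral_add (integrable_const ε)
      (hD2int.div_const ε), MeasureTheory.integral_div,
      integral_Dk_sq hXm hXi hXb hXu v k, MeasureTheory.integral_const]
    simp
  rw [hrhs] at hint
  have hfin : (ε + ((2/3:ℝ) ^ k * sigq) / ε) / 2 = (1 + sigq) / 2 * ε := by
    rw [← hε2]
    field_simp
  rw [hfin] at hint
  exact hint

lemma Dk_summable (hXm : ∀ v, Measurable (X v))
    (hXi : iIndepFun X P)
    (hXb : ∀ v ω, X v ω ∈ Set.Icc (0:ℝ) 1)
    (hXu : ∀ (x : List Bool) (ψ : ℝ → ℝ), Measurable ψ →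
      ∫ ω, ψ (X x ω) ∂P = ∫ y in Set.Icc (0:ℝ) 1, ψ y)
    (v : List Bool) : ∀ᵐ ω ∂P, Summable fun k => Dk X v k ω := by
  have hr0 : (0:ℝ) ≤ Real.sqrt (2/3) := Real.sqrt_nonneg _
  have hr1 : Real.sqrt (2/3) < 1 := by
    rw [show (1:ℝ) = Real.sqrt 1 from Real.sqrt_one.symm]
    exact Real.sqrt_lt_sqrt (by norm_num) (by norm_num)
  have hgeo : Summable fun k : ℕ => (1 + sigq)/2 * (Real.sqrt (2/3)) ^ k :=
    (summable_geometric_of_lt_one hr0 hr1).mul_left _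
  have hbnd_nonneg : ∀ k : ℕ, (0:ℝ) ≤ (1 + sigq)/2 * (Real.sqrt (2/3)) ^ k := fun k =>
    mul_nonneg (by nlinarith [sigq_nonneg]) (pow_nonneg hr0 k)
  have hDm : ∀ k, Measurable (Dk X v k) := fun k => Dk_measurable hXm v k
  have hlint : ∫⁻ ω, ∑' k, (‖Dk X v k ω‖₊ : ℝ≥0∞) ∂P < ⊤ := by
    rw [lintegral_tsum fun k => ((hDm k).nnnorm.coe_nnreal_ennreal).aemeasurable]
    have hle : ∀ k, ∫⁻ ω, (‖Dk X v k ω‖₊ : ℝ≥0∞) ∂P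
        ≤ ENNReal.ofReal ((1 + sigq)/2 * (Real.sqrt (2/3)) ^ k) := by
      intro k
      have hDint : Integrable (fun ω => |Dk X v k ω|) P :=
        integrable_of_bound P (hDm k).abs (2 ^ k) fun ω => by
          rw [abs_abs]; exact Dk_abs_le hXb v k ω
      have e1 : ENNReal.ofReal (∫ ω, |Dk X v k ω| ∂P)
          = ∫⁻ ω, ENNReal.ofReal |Dk X v k ω| ∂P :=
        MeasureTheory.ofReal_integral_eq_lintegral_ofReal hDint
          (Filter.Eventually.of_forall fun ω => abs_nonneg _)
      have e2 : ∫⁻ ω, (‖Dk X v k ω‖₊ : ℝ≥0∞) ∂P = ∫⁻ ω, ENNReal.ofReal |Dk X v k ω| ∂P :=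
        lintegral_congr fun ω => Real.enorm_eq_ofReal_abs _
      rw [e2, ← e1]
      exact ENNReal.ofReal_le_ofReal (integral_Dk_abs_le hXm hXi hXb hXu v k)
    calc (∑' k, ∫⁻ ω, (‖Dk X v k ω‖₊ : ℝ≥0∞) ∂P)
        ≤ ∑' k, ENNReal.ofReal ((1 + sigq)/2 * (Real.sqrt (2/3)) ^ k) :=
          ENNReal.tsum_le_tsum hle
      _ = ENNReal.ofReal (∑' k, (1 + sigq)/2 * (Real.sqrt (2/3)) ^ k) :=
          (ENNReal.ofReal_tsum_of_nonneg hbnd_nonneg hgeo).symm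
      _ < ⊤ := ENNReal.ofReal_lt_top
  have hae := MeasureTheory.ae_lt_top (Measurable.ennreal_tsum fun k => (hDm k).enorm) hlint.ne
  filter_upwards [hae] with ω hω
  have h1 : Summable fun k => ‖Dk X v k ω‖₊ := by
    rw [← ENNReal.tsum_coe_ne_top_iff_summable]
    exact hω.ne
  exact h1.of_nnnorm

end core
end QT

/-- For every vertex `v ∈ V` the random variable
`Q^v = lim_m Σ_{|w|<m} L^v_w·C(U^{vw})` exists almost surely, and the family
`(Q^v)_v` satisfies, almost surely for every `v`, the pathwise recursive Quicksort
fixed point equation `Q^v = U^v·Q^{v1} + (1−U^v)·Q^{v2} + C(U^v)`. -/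


theorem quicksort_tree_fixed_point {Ω : Type*} [MeasurableSpace Ω] (P : Measure Ω)
    [IsProbabilityMeasure P] (U : List Bool → Ω → ℝ)
    (hmeas : ∀ v, Measurable (U v))
    (hunif : ∀ v, Measure.map (U v) P = volume.restrict (Set.Icc (0 : ℝ) 1))
    (hindep : iIndepFun U P) :
    ∃ Q : List Bool → Ω → ℝ,
      (∀ v, ∀ᵐ ω ∂P, Filter.Tendsto (fun m => QSsum U v m ω) Filter.atTop (nhds (Q v ω)))
      ∧ (∀ᵐ ω ∂P, ∀ v : List Bool,
          Q v ω = U v ω * Q (v ++ [false]) ω + (1 - U v ω) * Q (v ++ [true]) ω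
            + Cq (U v ω)) := by
  classical
  set X : List Bool → Ω → ℝ := fun v ω => QT.clampI (U v ω) with hXdef
  have hXm : ∀ v, Measurable (X v) := fun v => QT.measurable_clampI.comp (hmeas v)
  have hXb : ∀ v ω, X v ω ∈ Set.Icc (0:ℝ) 1 := fun v ω => QT.clampI_mem _
  have hXi : iIndepFun X P :=
    hindep.comp (fun _ => QT.clampI) fun _ => QT.measurable_clampI
  have hXu : ∀ (x : List Bool) (ψ : ℝ → ℝ), Measurable ψ →
      ∫ ω, ψ (X x ω) ∂P = ∫ y in Set.Icc (0:ℝ) 1, ψ y := by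
    intro x ψ hψ
    have h1 : ∫ ω, ψ (X x ω) ∂P = ∫ y, ψ (QT.clampI y) ∂(Measure.map (U x) P) :=
      (MeasureTheory.integral_map (hmeas x).aemeasurable
        ((hψ.comp QT.measurable_clampI).aestronglyMeasurable)).symm
    rw [h1, hunif x]
    exact MeasureTheory.setIntegral_congr_fun measurableSet_Icc fun y hy => by
      rw [QT.clampI_of_mem hy]
  have hUX : ∀ᵐ ω ∂P, ∀ v, U v ω = X v ω := by
    rw [MeasureTheory.ae_all_iff]
    intro v
    have hmem : ∀ᵐ ω ∂P, U v ω ∈ Set.Icc (0:ℝ) 1 := by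
      rw [MeasureTheory.ae_iff]
      have hset : {ω | ¬ U v ω ∈ Set.Icc (0:ℝ) 1} = (U v) ⁻¹' (Set.Icc (0:ℝ) 1)ᶜ := rfl
      rw [hset, ← MeasureTheory.Measure.map_apply (hmeas v) measurableSet_Icc.compl, hunif v,
        MeasureTheory.Measure.restrict_apply measurableSet_Icc.compl]
      simp
    filter_upwards [hmem] with ω hω
    exact (QT.clampI_of_mem hω).symm
  have hconvX : ∀ v, ∀ᵐ ω ∂P,
      Filter.Tendsto (fun m => QSsum X v m ω) Filter.atTop (nhds (∑' k, QT.Dk X v k ω)) := by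
    intro v
    filter_upwards [QT.Dk_summable hXm hXi hXb hXu v] with ω hω
    exact hω.hasSum.tendsto_sum_nat
  refine ⟨fun v ω => ∑' k, QT.Dk X v k ω, ?_, ?_⟩
  · intro v
    filter_upwards [hconvX v, hUX] with ω h1 h2
    have he : (fun m => QSsum U v m ω) = fun m => QSsum X v m ω :=
      funext fun m => QT.QSsum_congr (fun p => h2 p) v m
    rw [he]
    exact h1
  · have hGa : ∀ᵐ ω ∂P, ∀ v, Filter.Tendsto (fun m => QSsum X v m ω) Filter.atTop
        (nhds (∑' k, QT.Dk X v k ω)) := MeasureTheory.ae_all_iff.2 hconvX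
    filter_upwards [hGa, hUX] with ω hω hU2
    intro v
    have h1 : Filter.Tendsto (fun m => QSsum X v (m+1) ω) Filter.atTop
        (nhds (∑' k, QT.Dk X v k ω)) := (hω v).comp (tendsto_add_atTop_nat 1)
    have heq : (fun m => QSsum X v (m+1) ω) = fun m => Cq (X v ω)
        + X v ω * QSsum X (v ++ [false]) m ω + (1 - X v ω) * QSsum X (v ++ [true]) m ω :=
      funext fun m => QT.QSsum_succ X v m ω
    rw [heq] at h1
    have h2 : Filter.Tendsto (fun m => Cq (X v ω) + X v ω * QSsum X (v ++ [false]) m ω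
        + (1 - X v ω) * QSsum X (v ++ [true]) m ω) Filter.atTop
        (nhds (Cq (X v ω) + X v ω * (∑' k, QT.Dk X (v ++ [false]) k ω)
          + (1 - X v ω) * (∑' k, QT.Dk X (v ++ [true]) k ω))) :=
      (tendsto_const_nhds.add ((hω (v ++ [false])).const_mul (X v ω))).add
        ((hω (v ++ [true])).const_mul (1 - X v ω))
    have h3 := tendsto_nhds_unique h1 h2
    show (∑' k, QT.Dk X v k ω) = U v ω * (∑' k, QT.Dk X (v ++ [false]) k ω)
      + (1 - U v ω) * (∑' k, QT.Dk X (v ++ [true]) k ω) + Cq (U v ω)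
    rw [hU2 v]
    linarith [h3]

end
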